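/- Let E be a finite ground set, f a polymatroid rank function on E, and let E be partitioned into nonempty blocks E_1, …, E_m with associated reals v_1 > v_2 > … > v_m > 0. Let w ∈ ℝ^E be the weight vector with w_i = v_j for i ∈ E_j, and let X* be the set of points x ∈ P(f) maximizing Σ_{i∈E} w_i x_i over P(f). For 1 ≤ j ≤ m write P_{<j} = E_1 ∪ … ∪ E_{j−1}. Then for every S ⊆ E, the maximum over x ∈ X* of Σ_{i∈S} w_i x_i equals Σ_{j=1}^m v_j · ( f(P_{<j} ∪ (S ∩ E_j)) − f(P_{<j}) ). -/

import Mathlib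

/-- The independence polytope of a set function on a finite ground set. -/
def indepP {E : Type*} [Fintype E] (f : Finset E → ℝ) : Set (E → ℝ) :=
  {x | (∀ i, 0 ≤ x i) ∧ ∀ S : Finset E, ∑ i ∈ S, x i ≤ f S}

namespace Stmt1Aux

variable {E : Type*} [DecidableEq E]

/-- greedy vector built along list `L`. -/
noncomputable def gx (f : Finset E → ℝ) (L : List E) (i : E) : ℝ :=
  f (insert i (L.takeWhile (· ≠ i)).toFinset) - f ((L.takeWhile (· ≠ i)).toFinset)

lemma takeWhile_split (L₁ L₂ : List E) (i : E) (h : i ∉ L₁) :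
    (L₁ ++ i :: L₂).takeWhile (· ≠ i) = L₁ := by
  induction L₁ with
  | nil => simp [List.takeWhile_cons]
  | cons a t ih =>
      simp only [List.mem_cons, not_or] at h
      have hai : ¬ a = i := fun e => h.1 e.symm
      simp [List.takeWhile_cons, hai]
      simpa using ih h.2

lemma toFinset_append_singleton (L₁ : List E) (a : E) :
    (L₁ ++ [a]).toFinset = insert a L₁.toFinset := by
  ext x; simp [or_comm]

lemma sum_gx_prefix (f : Finset E → ℝ) (hf0 : f ∅ = 0) (L : List E) (hL : L.Nodup) :
    ∀ L₁ L₂ : List E, L = L₁ ++ L₂ → ∑ i ∈ L₁.toFinset, gx f L i = f L₁.toFinset := by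
  intro L₁
  induction L₁ using List.reverseRecOn with
  | nil => intro L₂ h; simpa using hf0.symm
  | append_singleton L₁ a ih =>
      intro L₂ h
      rw [List.append_assoc] at h
      have hnd : (L₁ ++ a :: L₂).Nodup := h ▸ hL
      have haL₁ : a ∉ L₁ := fun hm =>
        (List.disjoint_of_nodup_append hnd) hm List.mem_cons_self
      have hTW : L.takeWhile (· ≠ a) = L₁ := by
        rw [h]; exact takeWhile_split _ _ _ haL₁
      have haF : a ∉ L₁.toFinset := by simpa using haL₁
      rw [toFinset_append_singleton, Finset.sum_insert haF, ih (a :: L₂) h]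
      have : gx f L a = f (insert a L₁.toFinset) - f L₁.toFinset := by
        rw [gx, hTW]
      rw [this]; ring

lemma sum_gx_le (f : Finset E → ℝ) (hf0 : f ∅ = 0)
    (hfsub : ∀ A B : Finset E, f (A ∪ B) + f (A ∩ B) ≤ f A + f B)
    (L : List E) (hL : L.Nodup) :
    ∀ L₁ L₂ : List E, L = L₁ ++ L₂ → ∀ T : Finset E, T ⊆ L₁.toFinset →
      ∑ i ∈ T, gx f L i ≤ f T := by
  intro L₁
  induction L₁ using List.reverseRecOn with
  | nil =>
      intro L₂ h T hT
      have : T = ∅ := Finset.subset_empty.mp (by simpa using hT)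
      simp [this, hf0]
  | append_singleton L₁ a ih =>
      intro L₂ h T hT
      rw [List.append_assoc] at h
      have hnd : (L₁ ++ a :: L₂).Nodup := h ▸ hL
      have haL₁ : a ∉ L₁ := fun hm =>
        (List.disjoint_of_nodup_append hnd) hm List.mem_cons_self
      have haF : a ∉ L₁.toFinset := by simpa using haL₁
      have hTW : L.takeWhile (· ≠ a) = L₁ := by
        rw [h]; exact takeWhile_split _ _ _ haL₁
      rw [toFinset_append_singleton] at hT
      by_cases ha : a ∈ T
      · have h1 : T.erase a ⊆ L₁.toFinset := by
          intro y hy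
          rcases Finset.mem_erase.mp hy with ⟨hy1, hy2⟩
          exact (Finset.mem_insert.mp (hT hy2)).resolve_left hy1
        have hsum : ∑ i ∈ T, gx f L i = gx f L a + ∑ i ∈ T.erase a, gx f L i :=
          (Finset.add_sum_erase T _ ha).symm
        have ihe := ih (a :: L₂) h (T.erase a) h1
        have hU : T ∪ L₁.toFinset = insert a L₁.toFinset := by
          apply Finset.Subset.antisymm
          · exact Finset.union_subset hT (Finset.subset_insert _ _)
          · exact Finset.insert_subset (Finset.mem_union_left _ ha)
              Finset.subset_union_right
        have hI : T ∩ L₁.toFinset = T.erase a := by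
          ext y
          simp only [Finset.mem_inter, Finset.mem_erase]
          constructor
          · rintro ⟨hy1, hy2⟩
            exact ⟨fun e => haF (e ▸ hy2), hy1⟩
          · rintro ⟨hy1, hy2⟩
            exact ⟨hy2, (Finset.mem_insert.mp (hT hy2)).resolve_left hy1⟩
        have hsubm := hfsub T L₁.toFinset
        rw [hU, hI] at hsubm
        have hgxa : gx f L a = f (insert a L₁.toFinset) - f L₁.toFinset := by
          rw [gx, hTW]
        rw [hsum, hgxa]
        linarith
      · exact ih (a :: L₂) h T
          (fun y hy => (Finset.mem_insert.mp (hT hy)).resolve_left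
            (fun e => ha (e ▸ hy)))

lemma abel (V D : ℕ → ℝ) (n : ℕ) (hD0 : D 0 = 0) (hVn : V n = 0) :
    ∑ k ∈ Finset.range n, V k * (D (k + 1) - D k)
      = ∑ k ∈ Finset.range n, (V k - V (k + 1)) * D (k + 1) := by
  have h2 : ∑ k ∈ Finset.range n,
      (V k * (D (k + 1) - D k) - (V k - V (k + 1)) * D (k + 1))
      = V n * D n - V 0 * D 0 := by
    rw [← Finset.sum_range_sub (fun k => V k * D k) n]
    apply Finset.sum_congr rfl
    intro k _; ring
  rw [Finset.sum_sub_distrib] at h2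
  rw [hD0, hVn] at h2
  linarith

end Stmt1Aux

open Stmt1Aux in
/-- with `f` a polymatroid rank function, `E` partitioned into
nonempty blocks with strictly decreasing positive values `v`, `w` the induced
weight vector, and `Xstar` the face of welfare maximizers over the independence
polytope, the maximum over `Xstar` of the `w`-weighted sum over any `S ⊆ E`
is `∑ j, v j * (f (P j ∪ (S ∩ blocks j)) - f (P j))`. -/
theorem stmt_1 {E : Type*} [Fintype E] [DecidableEq E]
    (f : Finset E → ℝ)
    (hf0 : f ∅ = 0)
    (hfmono : ∀ A B : Finset E, A ⊆ B → f A ≤ f B)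
    (hfsub : ∀ A B : Finset E, f (A ∪ B) + f (A ∩ B) ≤ f A + f B)
    (m : ℕ) (blocks : Fin m → Finset E)
    (hne : ∀ j, (blocks j).Nonempty)
    (hdisj : ∀ j j' : Fin m, j ≠ j' → Disjoint (blocks j) (blocks j'))
    (hcover : Finset.univ.biUnion blocks = (Finset.univ : Finset E))
    (v : Fin m → ℝ) (hvanti : StrictAnti v) (hvpos : ∀ j, 0 < v j)
    (w : E → ℝ) (hw : ∀ j : Fin m, ∀ i ∈ blocks j, w i = v j)
    (Xstar : Set (E → ℝ))
    (hX : Xstar = {x ∈ indepP f |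
      ∀ y ∈ indepP f, ∑ i, w i * y i ≤ ∑ i, w i * x i})
    (P : Fin m → Finset E)
    (hP : ∀ j, P j = (Finset.univ.filter (fun j' => j' < j)).biUnion blocks) :
    ∀ S : Finset E,
      IsGreatest {t : ℝ | ∃ x ∈ Xstar, t = ∑ i ∈ S, w i * x i}
        (∑ j, v j * (f (P j ∪ (S ∩ blocks j)) - f (P j))) := by
  classical
  subst hX
  intro S
  -- the ordering list
  set g : Fin m → List E := fun j => (S ∩ blocks j).toList ++ (blocks j \ S).toList
    with hg
  set L : List E := (List.finRange m).flatMap g with hLdef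
  have hgF : ∀ j, (g j).toFinset = blocks j := by
    intro j; ext i
    simp only [hg, List.toFinset_append, Finset.mem_union, List.mem_toFinset,
      Finset.mem_toList, Finset.mem_inter, Finset.mem_sdiff]
    tauto
  have hmemg : ∀ (j : Fin m) (i : E), i ∈ g j ↔ i ∈ blocks j := by
    intro j i; rw [← hgF j]; exact (List.mem_toFinset).symm
  have hgN : ∀ j, (g j).Nodup := by
    intro j
    refine List.Nodup.append (Finset.nodup_toList _) (Finset.nodup_toList _) ?_
    intro y hy hy'
    rw [Finset.mem_toList, Finset.mem_inter] at hy
    rw [Finset.mem_toList, Finset.mem_sdiff] at hy'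
    exact hy'.2 hy.1
  have hLnodup : L.Nodup := by
    rw [hLdef, List.nodup_flatMap]
    refine ⟨fun j _ => hgN j, (List.nodup_finRange m).imp ?_⟩
    intro a b hab y hya hyb
    exact Finset.disjoint_left.mp (hdisj a b hab)
      ((hmemg a y).mp hya) ((hmemg b y).mp hyb)
  have hblk : ∀ i : E, ∃ j, i ∈ blocks j := by
    intro i
    have : i ∈ Finset.univ.biUnion blocks := by
      rw [hcover]; exact Finset.mem_univ i
    simpa using this
  have hLuniv : L.toFinset = Finset.univ := by
    ext i
    simp only [List.mem_toFinset, hLdef, List.mem_flatMap, List.mem_finRange,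
      Finset.mem_univ, iff_true]
    obtain ⟨j, hj⟩ := hblk i
    exact ⟨j, by simp, (hmemg j i).mpr hj⟩
  -- prefix sets
  set PP : ℕ → Finset E :=
    fun k => (Finset.univ.filter (fun j : Fin m => (j : ℕ) < k)).biUnion blocks
    with hPP
  have hPeq : ∀ j, P j = PP (j : ℕ) := by
    intro j
    rw [hP j]
    show _ = (Finset.univ.filter (fun j' : Fin m => (j' : ℕ) < (j : ℕ))).biUnion blocks
    congr 1
  have hmemtake : ∀ (k : ℕ) (j : Fin m), j ∈ (List.finRange m).take k ↔ (j : ℕ) < k := by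
    intro k j
    simp only [List.mem_take_iff_getElem, List.getElem_finRange,
      List.length_finRange, lt_min_iff]
    constructor
    · rintro ⟨i, ⟨h1, h2⟩, rfl⟩; simpa using h1
    · intro h; exact ⟨j, ⟨h, j.isLt⟩, by simp [Fin.cast]⟩
  have hprefixPP : ∀ k : ℕ, (((List.finRange m).take k).flatMap g).toFinset = PP k := by
    intro k; ext i
    simp only [List.mem_toFinset, List.mem_flatMap, hPP, Finset.mem_biUnion,
      Finset.mem_filter, Finset.mem_univ, true_and]
    constructor
    · rintro ⟨j, hj, hi⟩
      exact ⟨j, (hmemtake k j).mp hj, (hmemg j i).mp hi⟩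
    · rintro ⟨j, hj, hi⟩
      exact ⟨j, (hmemtake k j).mpr hj, (hmemg j i).mpr hi⟩
  have hsplitQ : ∀ k : ℕ,
      L = ((List.finRange m).take k).flatMap g ++ ((List.finRange m).drop k).flatMap g := by
    intro k; rw [hLdef, ← List.flatMap_append, List.take_append_drop]
  have hdropcons : ∀ j : Fin m,
      (List.finRange m).drop (j : ℕ) = j :: (List.finRange m).drop ((j : ℕ) + 1) := by
    intro j
    rw [List.drop_eq_getElem_cons (by simpa using j.isLt)]
    congr 1
    simp [List.getElem_finRange, Fin.cast]
  have hsplitR : ∀ j : Fin m,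
      L = (((List.finRange m).take (j : ℕ)).flatMap g ++ (S ∩ blocks j).toList)
        ++ ((blocks j \ S).toList ++ ((List.finRange m).drop ((j : ℕ) + 1)).flatMap g) := by
    intro j
    rw [hsplitQ (j : ℕ), hdropcons j]
    simp only [List.flatMap_cons, hg]
    simp [List.append_assoc]
  have hRfin : ∀ j : Fin m,
      ((((List.finRange m).take (j : ℕ)).flatMap g) ++ (S ∩ blocks j).toList).toFinset
        = PP (j : ℕ) ∪ (S ∩ blocks j) := by
    intro j
    rw [List.toFinset_append, hprefixPP]
    congr 1
    exact Finset.toList_toFinset _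
  -- the greedy vector
  set x : E → ℝ := gx f L with hx
  have hxnonneg : ∀ i, 0 ≤ x i := fun i =>
    sub_nonneg.mpr (hfmono _ _ (Finset.subset_insert _ _))
  have hxle : ∀ T : Finset E, ∑ i ∈ T, x i ≤ f T := by
    intro T
    exact sum_gx_le f hf0 hfsub L hLnodup L [] (by simp) T
      (by rw [hLuniv]; exact Finset.subset_univ T)
  have hxmem : x ∈ indepP f := ⟨hxnonneg, hxle⟩
  have hxPP : ∀ k : ℕ, ∑ i ∈ PP k, x i = f (PP k) := by
    intro k
    have := sum_gx_prefix f hf0 L hLnodup (((List.finRange m).take k).flatMap g) _ (hsplitQ k)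
    rwa [hprefixPP] at this
  have hxR : ∀ j : Fin m,
      ∑ i ∈ PP (j : ℕ) ∪ S ∩ blocks j, x i = f (PP (j : ℕ) ∪ S ∩ blocks j) := by
    intro j
    have := sum_gx_prefix f hf0 L hLnodup _ _ (hsplitR j)
    rwa [hRfin] at this
  -- structure of PP
  have hPP0 : PP 0 = ∅ := by simp [hPP]
  have hdisjPPb : ∀ j : Fin m, Disjoint (PP (j : ℕ)) (blocks j) := by
    intro j
    rw [hPP]
    apply Finset.disjoint_biUnion_left _ _ _ |>.mpr
    intro j' hj'
    rw [Finset.mem_filter] at hj'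
    exact hdisj j' j (fun e => by simp [e] at hj')
  have hPPsucc : ∀ j : Fin m, PP ((j : ℕ) + 1) = PP (j : ℕ) ∪ blocks j := by
    intro j
    have hfil : (Finset.univ.filter (fun j' : Fin m => (j' : ℕ) < (j : ℕ) + 1)) =
        insert j (Finset.univ.filter (fun j' : Fin m => (j' : ℕ) < (j : ℕ))) := by
      ext j'
      simp only [Finset.mem_filter, Finset.mem_univ, true_and, Finset.mem_insert,
        Fin.ext_iff]
      omega
    rw [hPP]
    simp only [hfil, Finset.biUnion_insert]
    rw [Finset.union_comm]
  -- decomposition of objectives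
  have hPD : ((Finset.univ : Finset (Fin m)) : Set (Fin m)).PairwiseDisjoint blocks :=
    fun a _ b _ hab => hdisj a b hab
  have hsum_blocks : ∀ y : E → ℝ,
      ∑ i, w i * y i = ∑ j, v j * ∑ i ∈ blocks j, y i := by
    intro y
    rw [← hcover, Finset.sum_biUnion hPD]
    apply Finset.sum_congr rfl
    intro j _
    rw [Finset.mul_sum]
    apply Finset.sum_congr rfl
    intro i hi
    rw [hw j i hi]
  have hSun : S = Finset.univ.biUnion (fun j => S ∩ blocks j) := by
    ext i
    simp only [Finset.mem_biUnion, Finset.mem_univ, true_and, Finset.mem_inter]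
    constructor
    · intro hi
      obtain ⟨j, hj⟩ := hblk i
      exact ⟨j, hi, hj⟩
    · rintro ⟨j, hj, _⟩; exact hj
  have hPDS : ((Finset.univ : Finset (Fin m)) : Set (Fin m)).PairwiseDisjoint
      (fun j => S ∩ blocks j) := fun a _ b _ hab =>
    (hdisj a b hab).mono Finset.inter_subset_right Finset.inter_subset_right
  have hS_decomp : ∀ y : E → ℝ,
      ∑ i ∈ S, w i * y i = ∑ j, v j * ∑ i ∈ S ∩ blocks j, y i := by
    intro y
    conv_lhs => rw [hSun]
    rw [Finset.sum_biUnion hPDS]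
    apply Finset.sum_congr rfl
    intro j _
    rw [Finset.mul_sum]
    apply Finset.sum_congr rfl
    intro i hi
    rw [hw j i (Finset.mem_inter.mp hi).2]
  have hblocksum : ∀ (y : E → ℝ) (j : Fin m),
      ∑ i ∈ blocks j, y i = ∑ i ∈ PP ((j : ℕ) + 1), y i - ∑ i ∈ PP (j : ℕ), y i := by
    intro y j
    rw [hPPsucc j, Finset.sum_union (hdisjPPb j)]
    ring
  -- the ℕ-indexed value function
  set V : ℕ → ℝ := fun k => if h : k < m then v ⟨k, h⟩ else 0 with hV
  have hVfin : ∀ j : Fin m, V (j : ℕ) = v j := by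
    intro j
    simp only [hV, dif_pos j.isLt, Fin.eta]
  have hVm : V m = 0 := by simp [hV]
  have e1 : ∀ z : E → ℝ, ∑ j, v j * ∑ i ∈ blocks j, z i
      = ∑ k ∈ Finset.range m,
          V k * ((∑ i ∈ PP (k + 1), z i) - ∑ i ∈ PP k, z i) := by
    intro z
    rw [← Fin.sum_univ_eq_sum_range
      (fun k => V k * ((∑ i ∈ PP (k + 1), z i) - ∑ i ∈ PP k, z i)) m]
    apply Finset.sum_congr rfl
    intro j _
    rw [hblocksum z j, hVfin j]
  -- key identity for the objective gap
  have key : ∀ y : E → ℝ,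
      (∑ i, w i * x i) - ∑ i, w i * y i
        = ∑ k ∈ Finset.range m,
            (V k - V (k + 1)) * (f (PP (k + 1)) - ∑ i ∈ PP (k + 1), y i) := by
    intro y
    rw [hsum_blocks x, hsum_blocks y, e1 x, e1 y]
    rw [← abel V (fun k => f (PP k) - ∑ i ∈ PP k, y i) m
      (by show f (PP 0) - ∑ i ∈ PP 0, y i = 0; rw [hPP0]; simp [hf0]) hVm]
    rw [← Finset.sum_sub_distrib]
    apply Finset.sum_congr rfl
    intro k _
    rw [hxPP (k + 1), hxPP k]
    ring
  have hVcoef : ∀ k, k < m → 0 < V k - V (k + 1) := by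
    intro k hk
    by_cases h2 : k + 1 < m
    · have : v ⟨k + 1, h2⟩ < v ⟨k, hk⟩ := hvanti (by simp [Fin.lt_def])
      simp only [hV, dif_pos hk, dif_pos h2]
      linarith
    · simp only [hV, dif_pos hk, dif_neg h2]
      have := hvpos ⟨k, hk⟩
      linarith
  have hDy : ∀ y : E → ℝ, y ∈ indepP f → ∀ k : ℕ,
      0 ≤ f (PP k) - ∑ i ∈ PP k, y i := by
    intro y hy k
    exact sub_nonneg.mpr (hy.2 _)
  have hxopt : ∀ y ∈ indepP f, ∑ i, w i * y i ≤ ∑ i, w i * x i := by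
    intro y hy
    have hk := key y
    have hnn : 0 ≤ ∑ k ∈ Finset.range m,
        (V k - V (k + 1)) * (f (PP (k + 1)) - ∑ i ∈ PP (k + 1), y i) :=
      Finset.sum_nonneg fun k hk2 =>
        mul_nonneg (le_of_lt (hVcoef k (Finset.mem_range.mp hk2)))
          (hDy y hy (k + 1))
    linarith
  have hxX : x ∈ {x ∈ indepP f |
      ∀ y ∈ indepP f, ∑ i, w i * y i ≤ ∑ i, w i * x i} := ⟨hxmem, hxopt⟩
  -- tightness of every optimizer on the prefix sets
  have htight : ∀ z ∈ {x ∈ indepP f |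
      ∀ y ∈ indepP f, ∑ i, w i * y i ≤ ∑ i, w i * x i},
      ∀ k : ℕ, k ≤ m → ∑ i ∈ PP k, z i = f (PP k) := by
    rintro z ⟨hz1, hz2⟩ k hk
    have hle : ∑ i, w i * x i ≤ ∑ i, w i * z i := hz2 x hxmem
    have hk2 := key z
    have hzero : ∑ k ∈ Finset.range m,
        (V k - V (k + 1)) * (f (PP (k + 1)) - ∑ i ∈ PP (k + 1), z i) = 0 := by
      have hnn : 0 ≤ ∑ k ∈ Finset.range m,
          (V k - V (k + 1)) * (f (PP (k + 1)) - ∑ i ∈ PP (k + 1), z i) :=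
        Finset.sum_nonneg fun k hk3 =>
          mul_nonneg (le_of_lt (hVcoef k (Finset.mem_range.mp hk3)))
            (hDy z hz1 (k + 1))
      linarith
    have hterm : ∀ k' ∈ Finset.range m,
        (V k' - V (k' + 1)) * (f (PP (k' + 1)) - ∑ i ∈ PP (k' + 1), z i) = 0 :=
      (Finset.sum_eq_zero_iff_of_nonneg fun k' hk3 =>
        mul_nonneg (le_of_lt (hVcoef k' (Finset.mem_range.mp hk3)))
          (hDy z hz1 (k' + 1))).mp hzero
    cases k with
    | zero =>
        rw [hPP0, hf0]
        simp
    | succ k' =>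
        have hk'm : k' < m := by omega
        have hterm' := hterm k' (Finset.mem_range.mpr hk'm)
        have hcoef := hVcoef k' hk'm
        have hz0 : f (PP (k' + 1)) - ∑ i ∈ PP (k' + 1), z i = 0 := by
          rcases mul_eq_zero.mp hterm' with h | h
          · linarith
          · exact h
        linarith
  constructor
  · -- membership: greedy vector attains the value
    refine ⟨x, hxX, ?_⟩
    rw [hS_decomp x]
    apply Finset.sum_congr rfl
    intro j _
    congr 1
    have hd : Disjoint (PP (j : ℕ)) (S ∩ blocks j) :=
      (hdisjPPb j).mono_right Finset.inter_subset_right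
    have hsplit : ∑ i ∈ PP (j : ℕ) ∪ S ∩ blocks j, x i
        = ∑ i ∈ PP (j : ℕ), x i + ∑ i ∈ S ∩ blocks j, x i :=
      Finset.sum_union hd
    rw [hPeq j]
    have h1 := hxR j
    have h2 := hxPP (j : ℕ)
    linarith
  · -- upper bound
    rintro t ⟨z, hz, rfl⟩
    rw [hS_decomp z]
    apply Finset.sum_le_sum
    intro j _
    have hd : Disjoint (PP (j : ℕ)) (S ∩ blocks j) :=
      (hdisjPPb j).mono_right Finset.inter_subset_right
    obtain ⟨hz1, hz2⟩ := hz
    have hsplit : ∑ i ∈ PP (j : ℕ) ∪ S ∩ blocks j, z i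
        = ∑ i ∈ PP (j : ℕ), z i + ∑ i ∈ S ∩ blocks j, z i :=
      Finset.sum_union hd
    have hle := hz1.2 (PP (j : ℕ) ∪ S ∩ blocks j)
    have htp := htight z ⟨hz1, hz2⟩ (j : ℕ) (le_of_lt j.isLt)
    have h1 : ∑ i ∈ S ∩ blocks j, z i ≤ f (P j ∪ S ∩ blocks j) - f (P j) := by
      rw [hPeq j]
      linarith
    exact mul_le_mul_of_nonneg_left h1 (le_of_lt (hvpos j))
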